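/- For N even, the operators A(λ) and D(λ) have the following asymptotics: lim_{λ→0} λ^{N} A(λ) = (∏_{a=1}^{N} κ_aξ_a/i)·Θ^{−1}, lim_{λ→∞} λ^{−N} A(λ) = (∏_{a=1}^{N} κ_aξ_a^{−1}/i)·Θ, lim_{λ→0} λ^{N} D(λ) = (∏_{a=1}^{N} κ_aξ_a/i)·Θ, and lim_{λ→∞} λ^{−N} D(λ) = (∏_{a=1}^{N} κ_aξ_a^{−1}/i)·Θ^{−1} (limits taken entrywise, λ ranging over ℂ∖{0}). -/

import Mathlib

open Matrix Complex Filter Topology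

namespace SG

/-- Index set for the basis of `(ℂ^p)^{⊗N}`. -/
abbrev Idx (p N : ℕ) := Fin N → ZMod p

/-- Operators on `(ℂ^p)^{⊗N}`, realized as matrices. -/
abbrev Op (p N : ℕ) := Matrix (Idx p N) (Idx p N) ℂ

/-- The square root of `q`: `q^{1/2} := q^{(p+1)/2}`. -/
noncomputable def qh (p : ℕ) (q : ℂ) : ℂ := q ^ ((p + 1) / 2)

/-- The operator `𝗎_n = u_n · (shift at site n)`, `𝗎_n|k⟩ = u_n |k-1⟩`. -/
noncomputable def uop (p N : ℕ) (u : Fin N → ℂ) (n : Fin N) : Op p N :=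
  Matrix.of fun f g => if f = Function.update g n (g n - 1) then u n else 0

/-- The inverse of `𝗎_n`. -/
noncomputable def uopInv (p N : ℕ) (u : Fin N → ℂ) (n : Fin N) : Op p N :=
  Matrix.of fun f g => if f = Function.update g n (g n + 1) then (u n)⁻¹ else 0

/-- The operator `𝗏_n = v_n · (clock at site n)`, `𝗏_n|k⟩ = v_n q^k |k⟩`. -/
noncomputable def vop (p N : ℕ) (q : ℂ) (v : Fin N → ℂ) (n : Fin N) : Op p N :=
  Matrix.diagonal fun g => v n * q ^ (g n).val

/-- The inverse of `𝗏_n`. -/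
noncomputable def vopInv (p N : ℕ) (q : ℂ) (v : Fin N → ℂ) (n : Fin N) : Op p N :=
  Matrix.diagonal fun g => (v n * q ^ (g n).val)⁻¹

/-- The Lax matrix `L_n(λ)`. -/
noncomputable def Lax (p N : ℕ) [NeZero p] (q : ℂ) (κ ξ u v : Fin N → ℂ) (n : Fin N)
    (lam : ℂ) : Matrix (Fin 2) (Fin 2) (Op p N) :=
  !![κ n • (uop p N u n *
        ((qh p q)⁻¹ • (κ n • vop p N q v n) + qh p q • ((κ n)⁻¹ • vopInv p N q v n))),
     (κ n / Complex.I) • ((lam / ξ n) • vop p N q v n - (lam / ξ n)⁻¹ • vopInv p N q v n);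
     (κ n / Complex.I) • ((lam / ξ n) • vopInv p N q v n - (lam / ξ n)⁻¹ • vop p N q v n),
     κ n • (uopInv p N u n *
        (qh p q • ((κ n)⁻¹ • vop p N q v n) + (qh p q)⁻¹ • (κ n • vopInv p N q v n)))]

/-- The monodromy matrix `M(λ) = L_N(λ) ⋯ L_1(λ)`. -/
noncomputable def Mon (p N : ℕ) [NeZero p] (q : ℂ) (κ ξ u v : Fin N → ℂ) (lam : ℂ) :
    Matrix (Fin 2) (Fin 2) (Op p N) :=
  (((List.finRange N).map fun n => Lax p N q κ ξ u v n lam).reverse).prod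

/-- `A(λ)`, the (1,1) entry of the monodromy matrix. -/
noncomputable def Amat (p N : ℕ) [NeZero p] (q : ℂ) (κ ξ u v : Fin N → ℂ) (lam : ℂ) :
    Op p N := Mon p N q κ ξ u v lam 0 0

/-- `B(λ)`, the (1,2) entry of the monodromy matrix. -/
noncomputable def Bmat (p N : ℕ) [NeZero p] (q : ℂ) (κ ξ u v : Fin N → ℂ) (lam : ℂ) :
    Op p N := Mon p N q κ ξ u v lam 0 1

/-- `C(λ)`, the (2,1) entry of the monodromy matrix. -/
noncomputable def Cmat (p N : ℕ) [NeZero p] (q : ℂ) (κ ξ u v : Fin N → ℂ) (lam : ℂ) :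
    Op p N := Mon p N q κ ξ u v lam 1 0

/-- `D(λ)`, the (2,2) entry of the monodromy matrix. -/
noncomputable def Dmat (p N : ℕ) [NeZero p] (q : ℂ) (κ ξ u v : Fin N → ℂ) (lam : ℂ) :
    Op p N := Mon p N q κ ξ u v lam 1 1

/-- The transfer matrix `T(λ) = A(λ) + D(λ)`. -/
noncomputable def Tmat (p N : ℕ) [NeZero p] (q : ℂ) (κ ξ u v : Fin N → ℂ) (lam : ℂ) :
    Op p N := Amat p N q κ ξ u v lam + Dmat p N q κ ξ u v lam

/-- The grading charge `Θ = ∏_{n=1}^N 𝗏_n^{(-1)^n}` (sites `n : Fin N` correspond to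
the 1-indexed site `n+1`, whence the exponent `(-1)^{n+1}`); it is a diagonal operator. -/
noncomputable def Theta (p N : ℕ) (q : ℂ) (v : Fin N → ℂ) : Op p N :=
  Matrix.diagonal fun g => ∏ n : Fin N, (v n * q ^ (g n).val) ^ ((-1 : ℤ) ^ ((n : ℕ) + 1))

/-- The inverse `Θ^{-1}` of the grading charge. -/
noncomputable def ThetaInv (p N : ℕ) (q : ℂ) (v : Fin N → ℂ) : Op p N :=
  Matrix.diagonal fun g => ∏ n : Fin N, (v n * q ^ (g n).val) ^ ((-1 : ℤ) ^ (n : ℕ))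

/-- The average `𝒪(λ) = ∏_{k=1}^p O(q^k λ)` of a commuting family `O`. -/
noncomputable def avg (p N : ℕ) [NeZero p] (q : ℂ) (O : ℂ → Op p N) (lam : ℂ) : Op p N :=
  ((List.range p).map fun k => O (q ^ (k + 1) * lam)).prod


/-! ### Auxiliary machinery -/

/-- entrywise tendsto of 2×2 matrices of operators -/
def ET (p N : ℕ) [NeZero p] (F : ℂ → Matrix (Fin 2) (Fin 2) (Op p N)) (lf : Filter ℂ)
    (A : Matrix (Fin 2) (Fin 2) (Op p N)) : Prop :=
  ∀ (i j : Fin 2) (f g : Idx p N), Tendsto (fun lam => F lam i j f g) lf (𝓝 (A i j f g))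

theorem ET.mul {p N : ℕ} [NeZero p] {F G : ℂ → Matrix (Fin 2) (Fin 2) (Op p N)} {lf : Filter ℂ}
    {A B : Matrix (Fin 2) (Fin 2) (Op p N)} (hF : ET p N F lf A) (hG : ET p N G lf B) :
    ET p N (fun lam => F lam * G lam) lf (A * B) := by
  intro i j f g
  simp only [Matrix.mul_apply, Matrix.sum_apply]
  exact tendsto_finset_sum _ fun k _ => tendsto_finset_sum _ fun h _ =>
    (hF i k f h).mul (hG k j h g)

theorem ET.listProd {p N : ℕ} [NeZero p] {ι : Type*} {lf : Filter ℂ} (l : List ι)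
    (F : ι → ℂ → Matrix (Fin 2) (Fin 2) (Op p N)) (A : ι → Matrix (Fin 2) (Fin 2) (Op p N))
    (h : ∀ n, ET p N (F n) lf (A n)) :
    ET p N (fun lam => (l.map fun n => F n lam).prod) lf (l.map A).prod := by
  induction l with
  | nil => intro i j f g; simpa using tendsto_const_nhds
  | cons x l ih =>
    simp only [List.map_cons, List.prod_cons]
    exact (h x).mul ih

theorem smul_list_prod {p N : ℕ} [NeZero p] {ι : Type*} (c : ℂ) (l : List ι)
    (F : ι → Matrix (Fin 2) (Fin 2) (Op p N)) :
    (l.map fun n => c • F n).prod = c ^ l.length • (l.map F).prod := by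
  induction l with
  | nil => simp
  | cons x l ih =>
    rw [List.map_cons, List.prod_cons, List.map_cons, List.prod_cons, ih, smul_mul_assoc,
      mul_smul_comm, smul_smul, List.length_cons, pow_succ']

/-- antidiagonal 2×2 matrix with diagonal operator entries -/
noncomputable def AD (p N : ℕ) [NeZero p] (a b : Fin N → Idx p N → ℂ) (n : Fin N) :
    Matrix (Fin 2) (Fin 2) (Op p N) :=
  !![0, Matrix.diagonal (a n); Matrix.diagonal (b n), 0]

/-- recursive pair of diagonal entries of alternating products -/
noncomputable def FP (p N : ℕ) (a b : Fin N → Idx p N → ℂ) :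
    List (Fin N) → (Idx p N → ℂ) × (Idx p N → ℂ)
  | [] => (fun _ => 1, fun _ => 1)
  | x :: l => (fun g => a x g * (FP p N a b l).2 g, fun g => b x g * (FP p N a b l).1 g)

theorem AD_prod (p N : ℕ) [NeZero p] (a b : Fin N → Idx p N → ℂ) (l : List (Fin N)) :
    (l.map (AD p N a b)).prod =
      if Even l.length then
        !![Matrix.diagonal (FP p N a b l).1, 0; 0, Matrix.diagonal (FP p N a b l).2]
      else
        !![0, Matrix.diagonal (FP p N a b l).1; Matrix.diagonal (FP p N a b l).2, 0] := by
  induction l with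
  | nil =>
    simp only [List.map_nil, List.prod_nil, List.length_nil]
    rw [if_pos Even.zero]
    rw [Matrix.one_fin_two]
    congr 1 <;> simp [FP, Matrix.diagonal_one]
  | cons x l ih =>
    rw [List.map_cons, List.prod_cons, ih]
    by_cases h : Even l.length
    · rw [if_pos h, if_neg (by simp [Nat.even_add_one, h]), AD, Matrix.mul_fin_two]
      simp only [FP, Matrix.zero_mul, Matrix.mul_zero, zero_add, add_zero,
        Matrix.diagonal_mul_diagonal, zero_mul, mul_zero]
    · rw [if_neg h, if_pos (by simp [Nat.even_add_one, h]), AD, Matrix.mul_fin_two]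
      simp only [FP, Matrix.zero_mul, Matrix.mul_zero, zero_add, add_zero,
        Matrix.diagonal_mul_diagonal, zero_mul, mul_zero]

theorem FP_closed (p N : ℕ) (a b : Fin N → Idx p N → ℂ) (l : List (Fin N)) :
    (FP p N a b l).1 = (fun g => ∏ i : Fin l.length,
        if Even i.val then a (l.get i) g else b (l.get i) g) ∧
    (FP p N a b l).2 = (fun g => ∏ i : Fin l.length,
        if Even i.val then b (l.get i) g else a (l.get i) g) := by
  induction l with
  | nil => constructor <;> funext g <;> simp [FP]
  | cons x l ih =>
    constructor <;> funext g
    · show a x g * (FP p N a b l).2 g = _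
      simp only [List.length_cons]
      rw [ih.2, Fin.prod_univ_succ]
      congr 1
      refine Finset.prod_congr rfl fun i _ => ?_
      by_cases h : Even i.val <;> simp [h, Nat.even_add_one]
    · show b x g * (FP p N a b l).1 g = _
      simp only [List.length_cons]
      rw [ih.1, Fin.prod_univ_succ]
      congr 1
      refine Finset.prod_congr rfl fun i _ => ?_
      by_cases h : Even i.val <;> simp [h, Nat.even_add_one]

theorem FP_swap (p N : ℕ) (a b : Fin N → Idx p N → ℂ) (l : List (Fin N)) :
    (FP p N a b l).1 = (FP p N b a l).2 ∧ (FP p N a b l).2 = (FP p N b a l).1 := by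
  induction l with
  | nil => exact ⟨rfl, rfl⟩
  | cons x l ih =>
    constructor <;> funext g
    · show a x g * (FP p N a b l).2 g = a x g * (FP p N b a l).1 g
      rw [ih.2]
    · show b x g * (FP p N a b l).1 g = b x g * (FP p N b a l).2 g
      rw [ih.1]

set_option maxHeartbeats 1000000 in
theorem FP_rev1 (p N : ℕ) (hN0 : 0 < N) (hN : Even N) (a b : Fin N → Idx p N → ℂ) :
    (FP p N a b ((List.finRange N).reverse)).1 =
        (fun g => ∏ n : Fin N, if Odd n.val then a n g else b n g) := by
  have hlen : ((List.finRange N).reverse).length = N := by simp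
  have hget : ∀ i : Fin ((List.finRange N).reverse).length,
      ((List.finRange N).reverse).get i = ⟨N - 1 - i.val, by omega⟩ := by
    intro i
    rw [List.get_eq_getElem, List.getElem_reverse, List.getElem_finRange]
    ext
    simp [List.length_finRange]
  have hodd : Odd (N - 1) := Nat.Even.sub_odd (by omega) hN odd_one
  rw [(FP_closed p N a b _).1]
  funext g
  set A : ℕ → ℂ := fun m => if hm : m < N then a ⟨m, hm⟩ g else 1 with hA
  set B : ℕ → ℂ := fun m => if hm : m < N then b ⟨m, hm⟩ g else 1 with hB
  have key : ∀ j < N, (Odd (N - 1 - j) ↔ Even j) := by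
    intro j hj
    rcases Nat.even_or_odd j with h | h
    · simp [h, Nat.Odd.sub_even (by omega) hodd h]
    · have h2 : Even (N - 1 - j) := Nat.Odd.sub_odd hodd h
      simp [Nat.not_odd_iff_even.mpr h2, Nat.not_even_iff_odd.mpr h]
  calc (∏ i : Fin ((List.finRange N).reverse).length,
          if Even i.val then a (((List.finRange N).reverse).get i) g
          else b (((List.finRange N).reverse).get i) g)
      = ∏ i : Fin ((List.finRange N).reverse).length,
          (fun m => if Even m then A (N - 1 - m) else B (N - 1 - m)) i.val := by
        refine Finset.prod_congr rfl fun i _ => ?_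
        have hi : i.val < N := by omega
        have hlt : N - 1 - i.val < N := by omega
        rw [hget i]
        by_cases h : Even i.val <;> simp [h, hA, hB, hlt]
    _ = ∏ m ∈ Finset.range ((List.finRange N).reverse).length,
          (if Even m then A (N - 1 - m) else B (N - 1 - m)) :=
        Fin.prod_univ_eq_prod_range (fun m => if Even m then A (N - 1 - m) else B (N - 1 - m))
          ((List.finRange N).reverse.length)
    _ = ∏ m ∈ Finset.range N, (if Even m then A (N - 1 - m) else B (N - 1 - m)) := by rw [hlen]
    _ = ∏ m ∈ Finset.range N, (if Odd (N - 1 - m) then A (N - 1 - m) else B (N - 1 - m)) := by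
        refine Finset.prod_congr rfl fun m hm => ?_
        have hm' : m < N := Finset.mem_range.mp hm
        by_cases h : Even m
        · rw [if_pos h, if_pos ((key m hm').mpr h)]
        · rw [if_neg h, if_neg fun hc => h ((key m hm').mp hc)]
    _ = ∏ m ∈ Finset.range N, (if Odd m then A m else B m) :=
        Finset.prod_range_reflect (fun j => if Odd j then A j else B j) N
    _ = ∏ n : Fin N, (if Odd n.val then a n g else b n g) := by
        rw [← Fin.prod_univ_eq_prod_range (fun j => if Odd j then A j else B j) N]
        refine Finset.prod_congr rfl fun n _ => ?_
        simp only [hA, hB, n.isLt, dif_pos, Fin.eta]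

/-- limit coefficients at λ → 0 -/
noncomputable def zA (p N : ℕ) (q : ℂ) (κ ξ v : Fin N → ℂ) (n : Fin N) : Idx p N → ℂ :=
  fun g => -(κ n * ξ n / Complex.I) * (v n * q ^ (g n).val)⁻¹

noncomputable def zB (p N : ℕ) (q : ℂ) (κ ξ v : Fin N → ℂ) (n : Fin N) : Idx p N → ℂ :=
  fun g => -(κ n * ξ n / Complex.I) * (v n * q ^ (g n).val)

/-- limit coefficients at λ → ∞ -/
noncomputable def xA (p N : ℕ) (q : ℂ) (κ ξ v : Fin N → ℂ) (n : Fin N) : Idx p N → ℂ :=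
  fun g => κ n * (ξ n)⁻¹ / Complex.I * (v n * q ^ (g n).val)

noncomputable def xB (p N : ℕ) (q : ℂ) (κ ξ v : Fin N → ℂ) (n : Fin N) : Idx p N → ℂ :=
  fun g => κ n * (ξ n)⁻¹ / Complex.I * (v n * q ^ (g n).val)⁻¹


theorem eventually_ne_zero_cobounded : ∀ᶠ lam : ℂ in Bornology.cobounded ℂ, lam ≠ 0 := by
  have h := (tendsto_inv₀_cobounded' (α := ℂ)).eventually
    (eventually_mem_nhdsWithin (s := ({0}ᶜ : Set ℂ)) (a := 0))
  filter_upwards [h] with lam hl h0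
  apply hl
  simp [h0]

theorem ET_zero (p N : ℕ) [NeZero p] (q : ℂ) (κ ξ u v : Fin N → ℂ) (hξ : ∀ n, ξ n ≠ 0)
    (n : Fin N) :
    ET p N (fun lam => lam • Lax p N q κ ξ u v n lam) (𝓝[≠] (0 : ℂ))
      (AD p N (zA p N q κ ξ v) (zB p N q κ ξ v) n) := by
  have hne : ∀ᶠ lam : ℂ in 𝓝[≠] (0 : ℂ), lam ≠ 0 := eventually_mem_nhdsWithin
  intro i j f g
  fin_cases i <;> fin_cases j <;> simp only [Fin.mk_zero, Fin.mk_one]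
  · -- (0,0)
    have main : Tendsto (fun lam : ℂ => lam * (Lax p N q κ ξ u v n 1 0 0 f g))
        (𝓝[≠] (0 : ℂ)) (𝓝 (AD p N (zA p N q κ ξ v) (zB p N q κ ξ v) n 0 0 f g)) := by
      have hc : Continuous fun lam : ℂ => lam * (Lax p N q κ ξ u v n 1 0 0 f g) := by fun_prop
      have h0 := (hc.tendsto 0).mono_left (nhdsWithin_le_nhds : 𝓝[≠] (0:ℂ) ≤ 𝓝 0)
      convert h0 using 2
      simp [AD]
    refine Tendsto.congr' ?_ main
    filter_upwards [hne] with lam hl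
    simp [Lax, Matrix.smul_apply, smul_eq_mul]
  · -- (0,1)
    have main : Tendsto (fun lam : ℂ => κ n / Complex.I *
        (lam * lam * (ξ n)⁻¹ * (vop p N q v n f g) - ξ n * (vopInv p N q v n f g)))
        (𝓝[≠] (0 : ℂ)) (𝓝 (AD p N (zA p N q κ ξ v) (zB p N q κ ξ v) n 0 1 f g)) := by
      have hc : Continuous fun lam : ℂ => κ n / Complex.I *
          (lam * lam * (ξ n)⁻¹ * (vop p N q v n f g) - ξ n * (vopInv p N q v n f g)) := by
        fun_prop
      have h0 := (hc.tendsto 0).mono_left (nhdsWithin_le_nhds : 𝓝[≠] (0:ℂ) ≤ 𝓝 0)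
      convert h0 using 2
      rcases eq_or_ne f g with rfl | hfg
      · simp [AD, zA, zB, xA, xB, vop, vopInv, Matrix.diagonal_apply]
        try ring
      · simp [AD, zA, zB, xA, xB, vop, vopInv, hfg, Matrix.diagonal_apply]
    refine Tendsto.congr' ?_ main
    filter_upwards [hne] with lam hl
    have h1 : (lam • Lax p N q κ ξ u v n lam) 0 1 f g
        = lam * (κ n / Complex.I * (lam / ξ n * (vop p N q v n f g)
            - (lam / ξ n)⁻¹ * (vopInv p N q v n f g))) := by
      simp [Lax, Matrix.smul_apply, Matrix.sub_apply, smul_eq_mul]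
    have hxn : ξ n ≠ 0 := hξ n
    rw [h1, inv_div]
    field_simp
  · -- (1,0)
    have main : Tendsto (fun lam : ℂ => κ n / Complex.I *
        (lam * lam * (ξ n)⁻¹ * (vopInv p N q v n f g) - ξ n * (vop p N q v n f g)))
        (𝓝[≠] (0 : ℂ)) (𝓝 (AD p N (zA p N q κ ξ v) (zB p N q κ ξ v) n 1 0 f g)) := by
      have hc : Continuous fun lam : ℂ => κ n / Complex.I *
          (lam * lam * (ξ n)⁻¹ * (vopInv p N q v n f g) - ξ n * (vop p N q v n f g)) := by
        fun_prop
      have h0 := (hc.tendsto 0).mono_left (nhdsWithin_le_nhds : 𝓝[≠] (0:ℂ) ≤ 𝓝 0)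
      convert h0 using 2
      rcases eq_or_ne f g with rfl | hfg
      · simp [AD, zA, zB, xA, xB, vop, vopInv, Matrix.diagonal_apply]
        try ring
      · simp [AD, zA, zB, xA, xB, vop, vopInv, hfg, Matrix.diagonal_apply]
    refine Tendsto.congr' ?_ main
    filter_upwards [hne] with lam hl
    have h1 : (lam • Lax p N q κ ξ u v n lam) 1 0 f g
        = lam * (κ n / Complex.I * (lam / ξ n * (vopInv p N q v n f g)
            - (lam / ξ n)⁻¹ * (vop p N q v n f g))) := by
      simp [Lax, Matrix.smul_apply, Matrix.sub_apply, smul_eq_mul]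
    have hxn : ξ n ≠ 0 := hξ n
    rw [h1, inv_div]
    field_simp
  · -- (1,1)
    have main : Tendsto (fun lam : ℂ => lam * (Lax p N q κ ξ u v n 1 1 1 f g))
        (𝓝[≠] (0 : ℂ)) (𝓝 (AD p N (zA p N q κ ξ v) (zB p N q κ ξ v) n 1 1 f g)) := by
      have hc : Continuous fun lam : ℂ => lam * (Lax p N q κ ξ u v n 1 1 1 f g) := by fun_prop
      have h0 := (hc.tendsto 0).mono_left (nhdsWithin_le_nhds : 𝓝[≠] (0:ℂ) ≤ 𝓝 0)
      convert h0 using 2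
      simp [AD]
    refine Tendsto.congr' ?_ main
    filter_upwards [hne] with lam hl
    simp [Lax, Matrix.smul_apply, smul_eq_mul]

theorem ET_inf (p N : ℕ) [NeZero p] (q : ℂ) (κ ξ u v : Fin N → ℂ) (hξ : ∀ n, ξ n ≠ 0)
    (n : Fin N) :
    ET p N (fun lam => lam⁻¹ • Lax p N q κ ξ u v n lam) (Bornology.cobounded ℂ)
      (AD p N (xA p N q κ ξ v) (xB p N q κ ξ v) n) := by
  have hne : ∀ᶠ lam : ℂ in Bornology.cobounded ℂ, lam ≠ 0 := eventually_ne_zero_cobounded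
  intro i j f g
  fin_cases i <;> fin_cases j <;> simp only [Fin.mk_zero, Fin.mk_one]
  · -- (0,0)
    have main : Tendsto (fun lam : ℂ => lam⁻¹ * (Lax p N q κ ξ u v n 1 0 0 f g))
        (Bornology.cobounded ℂ) (𝓝 (AD p N (xA p N q κ ξ v) (xB p N q κ ξ v) n 0 0 f g)) := by
      have h0 := (tendsto_inv₀_cobounded (α := ℂ)).mul_const (Lax p N q κ ξ u v n 1 0 0 f g)
      convert h0 using 2
      simp [AD]
    refine Tendsto.congr' ?_ main
    filter_upwards [hne] with lam hl
    simp [Lax, Matrix.smul_apply, smul_eq_mul]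
  · -- (0,1)
    have hc : Continuous fun mu : ℂ => κ n / Complex.I *
        ((ξ n)⁻¹ * (vop p N q v n f g) - ξ n * (mu * mu) * (vopInv p N q v n f g)) := by fun_prop
    have main : Tendsto (fun lam : ℂ => κ n / Complex.I *
        ((ξ n)⁻¹ * (vop p N q v n f g) - ξ n * (lam⁻¹ * lam⁻¹) * (vopInv p N q v n f g)))
        (Bornology.cobounded ℂ) (𝓝 (AD p N (xA p N q κ ξ v) (xB p N q κ ξ v) n 0 1 f g)) := by
      have h0 := (hc.tendsto 0).comp (tendsto_inv₀_cobounded (α := ℂ))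
      simp only [Function.comp_def] at h0
      convert h0 using 2
      rcases eq_or_ne f g with rfl | hfg
      · simp [AD, zA, zB, xA, xB, vop, vopInv, Matrix.diagonal_apply]
        try ring
      · simp [AD, zA, zB, xA, xB, vop, vopInv, hfg, Matrix.diagonal_apply]
    refine Tendsto.congr' ?_ main
    filter_upwards [hne] with lam hl
    have h1 : (lam⁻¹ • Lax p N q κ ξ u v n lam) 0 1 f g
        = lam⁻¹ * (κ n / Complex.I * (lam / ξ n * (vop p N q v n f g)
            - (lam / ξ n)⁻¹ * (vopInv p N q v n f g))) := by
      simp [Lax, Matrix.smul_apply, Matrix.sub_apply, smul_eq_mul]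
    have hxn : ξ n ≠ 0 := hξ n
    rw [h1, inv_div]
    field_simp
  · -- (1,0)
    have hc : Continuous fun mu : ℂ => κ n / Complex.I *
        ((ξ n)⁻¹ * (vopInv p N q v n f g) - ξ n * (mu * mu) * (vop p N q v n f g)) := by fun_prop
    have main : Tendsto (fun lam : ℂ => κ n / Complex.I *
        ((ξ n)⁻¹ * (vopInv p N q v n f g) - ξ n * (lam⁻¹ * lam⁻¹) * (vop p N q v n f g)))
        (Bornology.cobounded ℂ) (𝓝 (AD p N (xA p N q κ ξ v) (xB p N q κ ξ v) n 1 0 f g)) := by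
      have h0 := (hc.tendsto 0).comp (tendsto_inv₀_cobounded (α := ℂ))
      simp only [Function.comp_def] at h0
      convert h0 using 2
      rcases eq_or_ne f g with rfl | hfg
      · simp [AD, zA, zB, xA, xB, vop, vopInv, Matrix.diagonal_apply]
        try ring
      · simp [AD, zA, zB, xA, xB, vop, vopInv, hfg, Matrix.diagonal_apply]
    refine Tendsto.congr' ?_ main
    filter_upwards [hne] with lam hl
    have h1 : (lam⁻¹ • Lax p N q κ ξ u v n lam) 1 0 f g
        = lam⁻¹ * (κ n / Complex.I * (lam / ξ n * (vopInv p N q v n f g)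
            - (lam / ξ n)⁻¹ * (vop p N q v n f g))) := by
      simp [Lax, Matrix.smul_apply, Matrix.sub_apply, smul_eq_mul]
    have hxn : ξ n ≠ 0 := hξ n
    rw [h1, inv_div]
    field_simp
  · -- (1,1)
    have main : Tendsto (fun lam : ℂ => lam⁻¹ * (Lax p N q κ ξ u v n 1 1 1 f g))
        (Bornology.cobounded ℂ) (𝓝 (AD p N (xA p N q κ ξ v) (xB p N q κ ξ v) n 1 1 f g)) := by
      have h0 := (tendsto_inv₀_cobounded (α := ℂ)).mul_const (Lax p N q κ ξ u v n 1 1 1 f g)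
      convert h0 using 2
      simp [AD]
    refine Tendsto.congr' ?_ main
    filter_upwards [hne] with lam hl
    simp [Lax, Matrix.smul_apply, smul_eq_mul]


theorem val_z1 (p N : ℕ) [NeZero p] (q : ℂ) (κ ξ v : Fin N → ℂ) (hN : Even N)
    (f g : Idx p N) :
    Matrix.diagonal (fun g => ∏ n : Fin N,
        if Odd n.val then zA p N q κ ξ v n g else zB p N q κ ξ v n g) f g
      = (∏ a : Fin N, κ a * ξ a / Complex.I) * ThetaInv p N q v f g := by
  rcases eq_or_ne f g with rfl | hfg
  · rw [Matrix.diagonal_apply_eq, ThetaInv, Matrix.diagonal_apply_eq]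
    calc (∏ n : Fin N, if Odd n.val then zA p N q κ ξ v n f else zB p N q κ ξ v n f)
        = ∏ n : Fin N, (-1 : ℂ) *
            ((κ n * ξ n / Complex.I) * (v n * q ^ ((f n).val)) ^ ((-1 : ℤ) ^ (n : ℕ))) := by
          refine Finset.prod_congr rfl fun n _ => ?_
          rcases Nat.even_or_odd (n : ℕ) with h | h
          · rw [if_neg (Nat.not_odd_iff_even.mpr h), Even.neg_one_pow h, zpow_one, zB]; ring
          · rw [if_pos h, Odd.neg_one_pow h, _root_.zpow_neg_one, zA]; ring
      _ = (∏ _n : Fin N, (-1 : ℂ)) * ∏ n : Fin N,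
            ((κ n * ξ n / Complex.I) * (v n * q ^ ((f n).val)) ^ ((-1 : ℤ) ^ (n : ℕ))) :=
          Finset.prod_mul_distrib
      _ = ∏ n : Fin N,
            ((κ n * ξ n / Complex.I) * (v n * q ^ ((f n).val)) ^ ((-1 : ℤ) ^ (n : ℕ))) := by
          rw [Finset.prod_const, Finset.card_univ, Fintype.card_fin, hN.neg_one_pow, one_mul]
      _ = (∏ a : Fin N, κ a * ξ a / Complex.I) * ∏ n : Fin N,
            (v n * q ^ ((f n).val)) ^ ((-1 : ℤ) ^ (n : ℕ)) := Finset.prod_mul_distrib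
  · rw [Matrix.diagonal_apply_ne _ hfg, ThetaInv, Matrix.diagonal_apply_ne _ hfg, mul_zero]

theorem val_z2 (p N : ℕ) [NeZero p] (q : ℂ) (κ ξ v : Fin N → ℂ) (hN : Even N)
    (f g : Idx p N) :
    Matrix.diagonal (fun g => ∏ n : Fin N,
        if Odd n.val then zB p N q κ ξ v n g else zA p N q κ ξ v n g) f g
      = (∏ a : Fin N, κ a * ξ a / Complex.I) * Theta p N q v f g := by
  rcases eq_or_ne f g with rfl | hfg
  · rw [Matrix.diagonal_apply_eq, Theta, Matrix.diagonal_apply_eq]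
    calc (∏ n : Fin N, if Odd n.val then zB p N q κ ξ v n f else zA p N q κ ξ v n f)
        = ∏ n : Fin N, (-1 : ℂ) *
            ((κ n * ξ n / Complex.I) * (v n * q ^ ((f n).val)) ^ ((-1 : ℤ) ^ ((n : ℕ) + 1))) := by
          refine Finset.prod_congr rfl fun n _ => ?_
          rcases Nat.even_or_odd (n : ℕ) with h | h
          · rw [if_neg (Nat.not_odd_iff_even.mpr h), Odd.neg_one_pow h.add_one, _root_.zpow_neg_one,
              zA]; ring
          · rw [if_pos h, Even.neg_one_pow h.add_one, zpow_one, zB]; ring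
      _ = (∏ _n : Fin N, (-1 : ℂ)) * ∏ n : Fin N,
            ((κ n * ξ n / Complex.I) * (v n * q ^ ((f n).val)) ^ ((-1 : ℤ) ^ ((n : ℕ) + 1))) :=
          Finset.prod_mul_distrib
      _ = ∏ n : Fin N,
            ((κ n * ξ n / Complex.I) * (v n * q ^ ((f n).val)) ^ ((-1 : ℤ) ^ ((n : ℕ) + 1))) := by
          rw [Finset.prod_const, Finset.card_univ, Fintype.card_fin, hN.neg_one_pow, one_mul]
      _ = (∏ a : Fin N, κ a * ξ a / Complex.I) * ∏ n : Fin N,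
            (v n * q ^ ((f n).val)) ^ ((-1 : ℤ) ^ ((n : ℕ) + 1)) := Finset.prod_mul_distrib
  · rw [Matrix.diagonal_apply_ne _ hfg, Theta, Matrix.diagonal_apply_ne _ hfg, mul_zero]

theorem val_x1 (p N : ℕ) [NeZero p] (q : ℂ) (κ ξ v : Fin N → ℂ)
    (f g : Idx p N) :
    Matrix.diagonal (fun g => ∏ n : Fin N,
        if Odd n.val then xA p N q κ ξ v n g else xB p N q κ ξ v n g) f g
      = (∏ a : Fin N, κ a * (ξ a)⁻¹ / Complex.I) * Theta p N q v f g := by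
  rcases eq_or_ne f g with rfl | hfg
  · rw [Matrix.diagonal_apply_eq, Theta, Matrix.diagonal_apply_eq]
    calc (∏ n : Fin N, if Odd n.val then xA p N q κ ξ v n f else xB p N q κ ξ v n f)
        = ∏ n : Fin N,
            ((κ n * (ξ n)⁻¹ / Complex.I) * (v n * q ^ ((f n).val)) ^ ((-1 : ℤ) ^ ((n : ℕ) + 1))) := by
          refine Finset.prod_congr rfl fun n _ => ?_
          rcases Nat.even_or_odd (n : ℕ) with h | h
          · rw [if_neg (Nat.not_odd_iff_even.mpr h), Odd.neg_one_pow h.add_one, _root_.zpow_neg_one, xB]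
          · rw [if_pos h, Even.neg_one_pow h.add_one, zpow_one, xA]
      _ = (∏ a : Fin N, κ a * (ξ a)⁻¹ / Complex.I) * ∏ n : Fin N,
            (v n * q ^ ((f n).val)) ^ ((-1 : ℤ) ^ ((n : ℕ) + 1)) := Finset.prod_mul_distrib
  · rw [Matrix.diagonal_apply_ne _ hfg, Theta, Matrix.diagonal_apply_ne _ hfg, mul_zero]

theorem val_x2 (p N : ℕ) [NeZero p] (q : ℂ) (κ ξ v : Fin N → ℂ)
    (f g : Idx p N) :
    Matrix.diagonal (fun g => ∏ n : Fin N,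
        if Odd n.val then xB p N q κ ξ v n g else xA p N q κ ξ v n g) f g
      = (∏ a : Fin N, κ a * (ξ a)⁻¹ / Complex.I) * ThetaInv p N q v f g := by
  rcases eq_or_ne f g with rfl | hfg
  · rw [Matrix.diagonal_apply_eq, ThetaInv, Matrix.diagonal_apply_eq]
    calc (∏ n : Fin N, if Odd n.val then xB p N q κ ξ v n f else xA p N q κ ξ v n f)
        = ∏ n : Fin N,
            ((κ n * (ξ n)⁻¹ / Complex.I) * (v n * q ^ ((f n).val)) ^ ((-1 : ℤ) ^ (n : ℕ))) := by
          refine Finset.prod_congr rfl fun n _ => ?_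
          rcases Nat.even_or_odd (n : ℕ) with h | h
          · rw [if_neg (Nat.not_odd_iff_even.mpr h), Even.neg_one_pow h, zpow_one, xA]
          · rw [if_pos h, Odd.neg_one_pow h, _root_.zpow_neg_one, xB]
      _ = (∏ a : Fin N, κ a * (ξ a)⁻¹ / Complex.I) * ∏ n : Fin N,
            (v n * q ^ ((f n).val)) ^ ((-1 : ℤ) ^ (n : ℕ)) := Finset.prod_mul_distrib
  · rw [Matrix.diagonal_apply_ne _ hfg, ThetaInv, Matrix.diagonal_apply_ne _ hfg, mul_zero]

/-- For `N` even, entrywise asymptotics of `A(λ)` and `D(λ)`: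
`lim_{λ→0} λ^N A(λ) = (∏ κ_a ξ_a/i)·Θ^{-1}`, `lim_{λ→∞} λ^{-N} A(λ) = (∏ κ_a ξ_a^{-1}/i)·Θ`,
`lim_{λ→0} λ^N D(λ) = (∏ κ_a ξ_a/i)·Θ`, `lim_{λ→∞} λ^{-N} D(λ) = (∏ κ_a ξ_a^{-1}/i)·Θ^{-1}`. -/
theorem statement1 (p N : ℕ) [NeZero p] (hp : Odd p) (hp1 : 1 < p)
    (q : ℂ) (hq : IsPrimitiveRoot q p)
    (κ ξ u v : Fin N → ℂ) (hκ : ∀ n, κ n ≠ 0) (hξ : ∀ n, ξ n ≠ 0)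
    (hu : ∀ n, ‖u n‖ = 1) (hv : ∀ n, ‖v n‖ = 1)
    (hN : 0 < N) (hNeven : Even N) :
    ∀ f g : Idx p N,
      Tendsto (fun lam : ℂ => lam ^ N * Amat p N q κ ξ u v lam f g) (𝓝[≠] (0 : ℂ))
        (𝓝 ((∏ a : Fin N, κ a * ξ a / Complex.I) * ThetaInv p N q v f g)) ∧
      Tendsto (fun lam : ℂ => lam ^ (-(N : ℤ)) * Amat p N q κ ξ u v lam f g)
        (Bornology.cobounded ℂ)
        (𝓝 ((∏ a : Fin N, κ a * (ξ a)⁻¹ / Complex.I) * Theta p N q v f g)) ∧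
      Tendsto (fun lam : ℂ => lam ^ N * Dmat p N q κ ξ u v lam f g) (𝓝[≠] (0 : ℂ))
        (𝓝 ((∏ a : Fin N, κ a * ξ a / Complex.I) * Theta p N q v f g)) ∧
      Tendsto (fun lam : ℂ => lam ^ (-(N : ℤ)) * Dmat p N q κ ξ u v lam f g)
        (Bornology.cobounded ℂ)
        (𝓝 ((∏ a : Fin N, κ a * (ξ a)⁻¹ / Complex.I) * ThetaInv p N q v f g)) := by
  classical
  set l := (List.finRange N).reverse with hl
  have hlen : l.length = N := by simp [hl]
  -- Z side
  have hz := ET.listProd (lf := 𝓝[≠] (0 : ℂ)) l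
    (fun n lam => lam • Lax p N q κ ξ u v n lam)
    (AD p N (zA p N q κ ξ v) (zB p N q κ ξ v)) (fun n => ET_zero p N q κ ξ u v hξ n)
  have hx := ET.listProd (lf := Bornology.cobounded ℂ) l
    (fun n lam => lam⁻¹ • Lax p N q κ ξ u v n lam)
    (AD p N (xA p N q κ ξ v) (xB p N q κ ξ v)) (fun n => ET_inf p N q κ ξ u v hξ n)
  have hMon : ∀ c : ℂ, (l.map fun n => Lax p N q κ ξ u v n c).prod = Mon p N q κ ξ u v c := by
    intro c
    rw [Mon, hl, List.map_reverse]
  have hfunz : (fun lam : ℂ => (l.map fun n => lam • Lax p N q κ ξ u v n lam).prod)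
      = fun lam : ℂ => lam ^ N • Mon p N q κ ξ u v lam := by
    funext lam
    rw [smul_list_prod, hlen, hMon]
  have hfunx : (fun lam : ℂ => (l.map fun n => lam⁻¹ • Lax p N q κ ξ u v n lam).prod)
      = fun lam : ℂ => (lam⁻¹) ^ N • Mon p N q κ ξ u v lam := by
    funext lam
    rw [smul_list_prod, hlen, hMon]
  have hEvl : Even l.length := by rw [hlen]; exact hNeven
  have hADz : (l.map (AD p N (zA p N q κ ξ v) (zB p N q κ ξ v))).prod =
      !![Matrix.diagonal (fun g => ∏ n : Fin N,
            if Odd n.val then zA p N q κ ξ v n g else zB p N q κ ξ v n g), 0;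
         0, Matrix.diagonal (fun g => ∏ n : Fin N,
            if Odd n.val then zB p N q κ ξ v n g else zA p N q κ ξ v n g)] := by
    rw [AD_prod, if_pos hEvl, hl, FP_rev1 p N hN hNeven,
      (FP_swap p N (zA p N q κ ξ v) (zB p N q κ ξ v) _).2,
      FP_rev1 p N hN hNeven]
  have hADx : (l.map (AD p N (xA p N q κ ξ v) (xB p N q κ ξ v))).prod =
      !![Matrix.diagonal (fun g => ∏ n : Fin N,
            if Odd n.val then xA p N q κ ξ v n g else xB p N q κ ξ v n g), 0;
         0, Matrix.diagonal (fun g => ∏ n : Fin N,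
            if Odd n.val then xB p N q κ ξ v n g else xA p N q κ ξ v n g)] := by
    rw [AD_prod, if_pos hEvl, hl, FP_rev1 p N hN hNeven,
      (FP_swap p N (xA p N q κ ξ v) (xB p N q κ ξ v) _).2,
      FP_rev1 p N hN hNeven]
  rw [hfunz, hADz] at hz
  rw [hfunx, hADx] at hx
  intro f g
  refine ⟨?_, ?_, ?_, ?_⟩
  · have t := hz 0 0 f g
    have hfn : (fun lam : ℂ => (lam ^ N • Mon p N q κ ξ u v lam) 0 0 f g)
        = fun lam : ℂ => lam ^ N * Amat p N q κ ξ u v lam f g := by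
      funext lam
      simp [Amat, Matrix.smul_apply, smul_eq_mul]
    beta_reduce at t
    rw [hfn] at t
    have hval : (!![Matrix.diagonal (fun g => ∏ n : Fin N,
            if Odd n.val then zA p N q κ ξ v n g else zB p N q κ ξ v n g), 0;
         0, Matrix.diagonal (fun g => ∏ n : Fin N,
            if Odd n.val then zB p N q κ ξ v n g else zA p N q κ ξ v n g)]
          : Matrix (Fin 2) (Fin 2) (Op p N)) 0 0 f g
        = (∏ a : Fin N, κ a * ξ a / Complex.I) * ThetaInv p N q v f g := by
      rw [show (!![Matrix.diagonal (fun g => ∏ n : Fin N,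
            if Odd n.val then zA p N q κ ξ v n g else zB p N q κ ξ v n g), 0;
         0, Matrix.diagonal (fun g => ∏ n : Fin N,
            if Odd n.val then zB p N q κ ξ v n g else zA p N q κ ξ v n g)]
          : Matrix (Fin 2) (Fin 2) (Op p N)) 0 0 = Matrix.diagonal (fun g => ∏ n : Fin N,
            if Odd n.val then zA p N q κ ξ v n g else zB p N q κ ξ v n g) from rfl]
      exact val_z1 p N q κ ξ v hNeven f g
    rw [hval] at t
    exact t
  · have t := hx 0 0 f g
    have hfn : (fun lam : ℂ => ((lam⁻¹) ^ N • Mon p N q κ ξ u v lam) 0 0 f g)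
        = fun lam : ℂ => lam ^ (-(N : ℤ)) * Amat p N q κ ξ u v lam f g := by
      funext lam
      rw [_root_.zpow_neg, zpow_natCast, ← inv_pow]
      simp [Amat, Matrix.smul_apply, smul_eq_mul]
    beta_reduce at t
    rw [hfn] at t
    have hval : (!![Matrix.diagonal (fun g => ∏ n : Fin N,
            if Odd n.val then xA p N q κ ξ v n g else xB p N q κ ξ v n g), 0;
         0, Matrix.diagonal (fun g => ∏ n : Fin N,
            if Odd n.val then xB p N q κ ξ v n g else xA p N q κ ξ v n g)]
          : Matrix (Fin 2) (Fin 2) (Op p N)) 0 0 f g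
        = (∏ a : Fin N, κ a * (ξ a)⁻¹ / Complex.I) * Theta p N q v f g := by
      rw [show (!![Matrix.diagonal (fun g => ∏ n : Fin N,
            if Odd n.val then xA p N q κ ξ v n g else xB p N q κ ξ v n g), 0;
         0, Matrix.diagonal (fun g => ∏ n : Fin N,
            if Odd n.val then xB p N q κ ξ v n g else xA p N q κ ξ v n g)]
          : Matrix (Fin 2) (Fin 2) (Op p N)) 0 0 = Matrix.diagonal (fun g => ∏ n : Fin N,
            if Odd n.val then xA p N q κ ξ v n g else xB p N q κ ξ v n g) from rfl]
      exact val_x1 p N q κ ξ v f g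
    rw [hval] at t
    exact t
  · have t := hz 1 1 f g
    have hfn : (fun lam : ℂ => (lam ^ N • Mon p N q κ ξ u v lam) 1 1 f g)
        = fun lam : ℂ => lam ^ N * Dmat p N q κ ξ u v lam f g := by
      funext lam
      simp [Dmat, Matrix.smul_apply, smul_eq_mul]
    beta_reduce at t
    rw [hfn] at t
    have hval : (!![Matrix.diagonal (fun g => ∏ n : Fin N,
            if Odd n.val then zA p N q κ ξ v n g else zB p N q κ ξ v n g), 0;
         0, Matrix.diagonal (fun g => ∏ n : Fin N,
            if Odd n.val then zB p N q κ ξ v n g else zA p N q κ ξ v n g)]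
          : Matrix (Fin 2) (Fin 2) (Op p N)) 1 1 f g
        = (∏ a : Fin N, κ a * ξ a / Complex.I) * Theta p N q v f g := by
      rw [show (!![Matrix.diagonal (fun g => ∏ n : Fin N,
            if Odd n.val then zA p N q κ ξ v n g else zB p N q κ ξ v n g), 0;
         0, Matrix.diagonal (fun g => ∏ n : Fin N,
            if Odd n.val then zB p N q κ ξ v n g else zA p N q κ ξ v n g)]
          : Matrix (Fin 2) (Fin 2) (Op p N)) 1 1 = Matrix.diagonal (fun g => ∏ n : Fin N,
            if Odd n.val then zB p N q κ ξ v n g else zA p N q κ ξ v n g) from rfl]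
      exact val_z2 p N q κ ξ v hNeven f g
    rw [hval] at t
    exact t
  · have t := hx 1 1 f g
    have hfn : (fun lam : ℂ => ((lam⁻¹) ^ N • Mon p N q κ ξ u v lam) 1 1 f g)
        = fun lam : ℂ => lam ^ (-(N : ℤ)) * Dmat p N q κ ξ u v lam f g := by
      funext lam
      rw [_root_.zpow_neg, zpow_natCast, ← inv_pow]
      simp [Dmat, Matrix.smul_apply, smul_eq_mul]
    beta_reduce at t
    rw [hfn] at t
    have hval : (!![Matrix.diagonal (fun g => ∏ n : Fin N,
            if Odd n.val then xA p N q κ ξ v n g else xB p N q κ ξ v n g), 0;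
         0, Matrix.diagonal (fun g => ∏ n : Fin N,
            if Odd n.val then xB p N q κ ξ v n g else xA p N q κ ξ v n g)]
          : Matrix (Fin 2) (Fin 2) (Op p N)) 1 1 f g
        = (∏ a : Fin N, κ a * (ξ a)⁻¹ / Complex.I) * ThetaInv p N q v f g := by
      rw [show (!![Matrix.diagonal (fun g => ∏ n : Fin N,
            if Odd n.val then xA p N q κ ξ v n g else xB p N q κ ξ v n g), 0;
         0, Matrix.diagonal (fun g => ∏ n : Fin N,
            if Odd n.val then xB p N q κ ξ v n g else xA p N q κ ξ v n g)]
          : Matrix (Fin 2) (Fin 2) (Op p N)) 1 1 = Matrix.diagonal (fun g => ∏ n : Fin N,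
            if Odd n.val then xB p N q κ ξ v n g else xA p N q κ ξ v n g) from rfl]
      exact val_x2 p N q κ ξ v f g
    rw [hval] at t
    exact t

end SG
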